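/- For every τ ∈ (0, 1/100] there exists μ > 0 (of order τ²) such that for every R > 0 and all points A, B, C on the circle ∂B_R ⊂ ℝ² centered at the origin: if D is a point of the closed disk B̄_R minimizing P ↦ |PA| + |PB| + |PC| over B̄_R and |D| ≥ τR, then |DA| + |DB| + |DC| < (3 − μ)R. -/

import Mathlib

open MeasureTheory Metric Filter
open scoped RealInnerProductSpace

noncomputable section

/-- Squared Euclidean norm of the full gradient of `u : ℂ → ℂ`
(`|∇u|² = |∂_x u|² + |∂_y u|²`). -/
def gradSq (u : ℂ → ℂ) (z : ℂ) : ℝ :=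
  ‖fderiv ℝ u z 1‖ ^ 2 + ‖fderiv ℝ u z Complex.I‖ ^ 2

/-- The Allen–Cahn energy `E(u,Ω) = ∫_Ω (½|∇u|² + W(u))`. -/
def energy (W : ℂ → ℝ) (u : ℂ → ℂ) (Ω : Set ℂ) : ℝ :=
  ∫ z in Ω, ((1 / 2) * gradSq u z + W (u z))

/-- Minimizing solution in the sense of De Giorgi. -/
def IsMinimizingSolution (W : ℂ → ℝ) (u : ℂ → ℂ) : Prop :=
  ∀ Ω : Set ℂ, IsOpen Ω → Bornology.IsBounded Ω →
    ∀ v : ℂ → ℂ, ContDiff ℝ 1 v → HasCompactSupport v → tsupport v ⊆ Ω →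
      energy W u Ω ≤ energy W (u + v) Ω

/-- Hypothesis (H1) on the triple-well potential. -/
structure H1 (W : ℂ → ℝ) (a : Fin 3 → ℂ) (M c₁ c₂ : ℝ) : Prop where
  smooth : ContDiff ℝ 2 W
  nonneg : ∀ z, 0 ≤ W z
  zeroSet : ∀ z, W z = 0 ↔ ∃ i, z = a i
  inj : Function.Injective a
  coercive : ∀ z : ℂ, M < ‖z‖ → 0 < ⟪gradient W z, z⟫
  c₁pos : 0 < c₁
  c₁lt : c₁ < c₂
  hessLower : ∀ (i : Fin 3) (ξ : ℂ), c₁ * ‖ξ‖ ^ 2 ≤ iteratedFDeriv ℝ 2 W (a i) ![ξ, ξ]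
  hessUpper : ∀ (i : Fin 3) (ξ : ℂ), iteratedFDeriv ℝ 2 W (a i) ![ξ, ξ] ≤ c₂ * ‖ξ‖ ^ 2

/-- The 1D action of a path. -/
def action1D (W : ℂ → ℝ) (U : ℝ → ℂ) : ℝ :=
  ∫ t : ℝ, ((1 / 2) * ‖deriv U t‖ ^ 2 + W (U t))

/-- Actions of 1D connections between two wells. -/
def connectionActions (W : ℂ → ℝ) (p q : ℂ) : Set ℝ :=
  {e | ∃ U : ℝ → ℂ, Differentiable ℝ U ∧
    Tendsto U atBot (nhds p) ∧ Tendsto U atTop (nhds q) ∧ e = action1D W U}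

/-- Hypothesis (H2): all connection actions are minimized, with common minimal value `σ`. -/
structure H2 (W : ℂ → ℝ) (a : Fin 3 → ℂ) (σ : ℝ) : Prop where
  pos : 0 < σ
  least : ∀ i j : Fin 3, i ≠ j → IsLeast (connectionActions W (a i) (a j)) σ

/-- The constants `δ_W, c_W, C_W` from the potential estimate near the wells. -/
structure WellConstants (W : ℂ → ℝ) (a : Fin 3 → ℂ) (δW cW CW : ℝ) : Prop where
  δWpos : 0 < δW
  cWpos : 0 < cW
  cWle : cW ≤ CW
  near : ∀ (i : Fin 3) (u : ℂ), ‖u - a i‖ < δW →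
    (1 / 2) * cW * ‖u - a i‖ ^ 2 ≤ W u ∧ W u ≤ (1 / 2) * CW * ‖u - a i‖ ^ 2
  far : ∀ (δ : ℝ) (u : ℂ), 0 ≤ δ → δ < δW → (∀ i : Fin 3, δ ≤ ‖u - a i‖) →
    (1 / 2) * cW * δ ^ 2 ≤ W u

/-- Line energy (tangential Dirichlet part plus potential, with respect to arclength)
of `u` along the part of the circle of radius `R` parametrized by angles in `s`. -/
def circleEnergyOn (W : ℂ → ℝ) (u : ℂ → ℂ) (R : ℝ) (s : Set ℝ) : ℝ :=
  ∫ θ in s, ((1 / (2 * R)) * ‖deriv (fun t => u (circleMap 0 R t)) θ‖ ^ 2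
    + R * W (u (circleMap 0 R θ)))

/-- Total line energy `∫_{∂B_R} (½|∂_T u|² + W(u)) dH¹` along the circle of radius `R`. -/
def circleEnergy (W : ℂ → ℝ) (u : ℂ → ℂ) (R : ℝ) : ℝ :=
  circleEnergyOn W u R (Set.Ico 0 (2 * Real.pi))

/-- `u` minimizes the energy on `Ω` among (continuous) competitors with its own
boundary values. -/
def MinimizesWithBV (W : ℂ → ℝ) (u : ℂ → ℂ) (Ω : Set ℂ) : Prop :=
  ∀ v : ℂ → ℂ, Continuous v → (∀ z ∉ Ω, v z = u z) → energy W u Ω ≤ energy W v Ω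

/-- An open sector with vertex `p` and aperture angles `(θ₁, θ₂)`. -/
def Sector (p : ℂ) (θ₁ θ₂ : ℝ) : Set ℂ :=
  {z | ∃ r θ : ℝ, 0 < r ∧ θ₁ < θ ∧ θ < θ₂ ∧ z = p + r * Complex.exp (θ * Complex.I)}

/-- A triple junction map centered at `p`: equal to `a k` on the three open sectors with
vertex `p` and opening angle `2π/3`. -/
def IsTripleJunctionMap (a : Fin 3 → ℂ) (p : ℂ) (u₀ : ℂ → ℂ) : Prop :=
  ∃ φ : ℝ, ∀ k : Fin 3,
    ∀ z ∈ Sector p (φ + 2 * Real.pi * ((k : ℕ) : ℝ) / 3)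
        (φ + 2 * Real.pi * (((k : ℕ) : ℝ) + 1) / 3),
      u₀ z = a k

/-- The standing setting: a bounded minimizing solution with energy pinching at scale `R₀`. -/
structure Standing (W : ℂ → ℝ) (a : Fin 3 → ℂ) (σ M ε R₀ : ℝ) (u : ℂ → ℂ) : Prop where
  minimizing : IsMinimizingSolution W u
  diff : Differentiable ℝ u
  bound : ∀ z, ‖u z‖ + Real.sqrt (gradSq u z) ≤ M
  Rpos : 0 < R₀
  circle_lb : 3 * σ - ε ≤ circleEnergy W u R₀
  circle_ub : circleEnergy W u R₀ ≤ 3 * σ + ε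
  bulk_lb : 3 * σ - ε ≤ energy W u (Metric.ball 0 R₀) / R₀
  bulk_ub : energy W u (Metric.ball 0 R₀) / R₀ ≤ 3 * σ + ε

/-- The arc structure on `∂B_{R₀}`: three well arcs `I₁`, `I₂`, `I₃` given in angles by
`[t0,t1]`, `[t2,t3]`, `[t4,t5]`, separated by the transition arcs `I₁₂ = [t1,t2]`,
`I₂₃ = [t3,t4]`, `I₃₁ = [t5, t0+2π]`. -/
structure ArcSetup (a : Fin 3 → ℂ) (δ C₁ C₂ R₀ : ℝ) (u : ℂ → ℂ)
    (t0 t1 t2 t3 t4 t5 : ℝ) : Prop where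
  h01 : t0 < t1
  h12 : t1 < t2
  h23 : t2 < t3
  h34 : t3 < t4
  h45 : t4 < t5
  h50 : t5 < t0 + 2 * Real.pi
  end0l : ‖u (circleMap 0 R₀ t0) - a 0‖ ≤ δ
  end0r : ‖u (circleMap 0 R₀ t1) - a 0‖ ≤ δ
  end1l : ‖u (circleMap 0 R₀ t2) - a 1‖ ≤ δ
  end1r : ‖u (circleMap 0 R₀ t3) - a 1‖ ≤ δ
  end2l : ‖u (circleMap 0 R₀ t4) - a 2‖ ≤ δ
  end2r : ‖u (circleMap 0 R₀ t5) - a 2‖ ≤ δ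
  phase0 : ∀ s ∈ Set.Icc t0 t1, ∀ j : Fin 3, j ≠ 0 → δ < ‖u (circleMap 0 R₀ s) - a j‖
  phase1 : ∀ s ∈ Set.Icc t2 t3, ∀ j : Fin 3, j ≠ 1 → δ < ‖u (circleMap 0 R₀ s) - a j‖
  phase2 : ∀ s ∈ Set.Icc t4 t5, ∀ j : Fin 3, j ≠ 2 → δ < ‖u (circleMap 0 R₀ s) - a j‖
  trans01 : ∀ s ∈ Set.Icc t1 t2, ∀ j : Fin 3, δ < ‖u (circleMap 0 R₀ s) - a j‖
  trans12 : ∀ s ∈ Set.Icc t3 t4, ∀ j : Fin 3, δ < ‖u (circleMap 0 R₀ s) - a j‖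
  trans20 : ∀ s ∈ Set.Icc t5 (t0 + 2 * Real.pi), ∀ j : Fin 3, δ < ‖u (circleMap 0 R₀ s) - a j‖
  meas_lb : C₁ ≤ R₀ * ((t2 - t1) + (t4 - t3) + (t0 + 2 * Real.pi - t5))
  meas_ub : R₀ * ((t2 - t1) + (t4 - t3) + (t0 + 2 * Real.pi - t5)) ≤ C₂ / δ ^ 2

/-- Midpoint of the arc with angles `θ₁ ≤ θ₂` on the circle of radius `R`. -/
def midpt (R θ₁ θ₂ : ℝ) : ℂ := circleMap 0 R ((θ₁ + θ₂) / 2)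

/-- `D` minimizes the total distance to `A`, `B`, `C` over the closed disk of radius `R`. -/
def IsFermatPoint (R : ℝ) (A B C D : ℂ) : Prop :=
  D ∈ Metric.closedBall (0 : ℂ) R ∧
    ∀ P ∈ Metric.closedBall (0 : ℂ) R,
      dist D A + dist D B + dist D C ≤ dist P A + dist P B + dist P C

/-- The tangential derivative of `u` at `z` (along the circle centered at the origin
through `z`). -/
def tangentialDeriv (u : ℂ → ℂ) (z : ℂ) : ℂ :=
  if z = 0 then 0 else ‖z‖⁻¹ • fderiv ℝ u z (Complex.I * z)

/-- Planar cross product of two vectors. -/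
def cross2 (w v : ℂ) : ℝ := w.re * v.im - w.im * v.re

lemma normsq_c (z : ℂ) : ‖z‖^2 = z.re^2 + z.im^2 := by
  rw [Complex.sq_norm, Complex.normSq_apply]; ring

lemma le_abs_of_sq (a b : ℝ) (hb : 0 ≤ b) (h : b^2 ≤ a^2) : b ≤ |a| := by
  nlinarith [sq_abs a, abs_nonneg a]

lemma abs_le_of_sq (a b : ℝ) (hb : 0 ≤ b) (h : a^2 ≤ b^2) : |a| ≤ b := by
  nlinarith [sq_abs a, abs_nonneg a]

lemma alpha_lb (τ R dn a c E : ℝ) (hτ0 : 0 < τ) (hR : 0 < R)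
    (hd : τ*R ≤ dn) (hdR : dn ≤ R)
    (hlag : a^2 + c^2 = dn^2*R^2)
    (hc : c^2 ≤ τ^2*R^4/2)
    (hE : E*(τ^2*R^3) = dn*c^2) :
    (dn*R - E ≤ |a| ∧ |a| ≤ dn*R) ∧ 0 ≤ E := by
  have hd0 : 0 < dn := lt_of_lt_of_le (by positivity) hd
  have hP : (0:ℝ) < τ^2*R^3 := by positivity
  have hE0 : 0 ≤ E := by nlinarith [sq_nonneg c, mul_pos hd0 hP]
  have hEhalf : E ≤ dn*R/2 := by nlinarith [mul_pos hd0 hP, hc]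
  have hkey : c^2 ≤ E*(dn*R) := by
    have h1 : c^2*(τ^2*R^3) ≤ E*(dn*R)*(τ^2*R^3) := by
      nlinarith [mul_nonneg (mul_nonneg (sub_nonneg.2 hd)
        (by positivity : (0:ℝ) ≤ dn + τ*R)) (sq_nonneg c), hE]
    exact le_of_mul_le_mul_right h1 hP
  refine ⟨⟨le_abs_of_sq _ _ (by nlinarith [mul_pos hd0 hR]) ?_,
    abs_le_of_sq _ _ (by positivity) (by nlinarith [sq_nonneg c])⟩, hE0⟩
  nlinarith [hkey, mul_nonneg hE0 (by nlinarith [mul_pos hd0 hR] : (0:ℝ) ≤ dn*R - E)]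

lemma aux_sum (K e₁ e₂ e₃ α₁ α₂ α₃ : ℝ)
    (h₁ : K - e₁ ≤ |α₁|) (h₂ : K - e₂ ≤ |α₂|) (h₃ : K - e₃ ≤ |α₃|)
    (h₁' : |α₁| ≤ K) (h₂' : |α₂| ≤ K) (h₃' : |α₃| ≤ K) :
    K - (e₁ + e₂ + e₃) ≤ |α₁ + α₂ + α₃| := by
  rcases abs_cases α₁ with ⟨q1, s1⟩ | ⟨q1, s1⟩ <;> rw [q1] at h₁ h₁' <;>
    rcases abs_cases α₂ with ⟨q2, s2⟩ | ⟨q2, s2⟩ <;> rw [q2] at h₂ h₂' <;>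
    rcases abs_cases α₃ with ⟨q3, s3⟩ | ⟨q3, s3⟩ <;> rw [q3] at h₃ h₃' <;>
    rw [le_abs] <;>
    first | (left; linarith) | (right; linarith)

lemma testpt (R : ℝ) (hR : 0 < R) (A P : ℂ) (hA : ‖A‖ = R) :
    dist P A ≤ R + ((P.re^2 + P.im^2) - 2*(P.re*A.re + P.im*A.im))/(2*R) := by
  have hA2 : A.re^2 + A.im^2 = R^2 := by rw [← normsq_c, hA]
  have hd2 : (dist P A)^2 = (P.re - A.re)^2 + (P.im - A.im)^2 := by
    rw [dist_eq_norm, normsq_c]; simp [Complex.sub_re, Complex.sub_im]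
  have h2R : (0:ℝ) < 2*R := by linarith
  rw [show R + ((P.re^2 + P.im^2) - 2*(P.re*A.re + P.im*A.im))/(2*R)
      = (2*R*R + ((P.re^2 + P.im^2) - 2*(P.re*A.re + P.im*A.im)))/(2*R) by field_simp,
    le_div_iff₀ h2R]
  nlinarith [sq_nonneg (dist P A - R), dist_nonneg (x := P) (y := A)]

lemma mid_core (R b s c p : ℝ) (hR : 0 < R) (hb0 : 0 ≤ b) (hs0 : 0 ≤ s)
    (hbR : b ≤ 2*R) (hlag : p^2 + c^2 = R^2*b^2)
    (hgap : (R+b)^2 - 4*s^2 = 2*(R*b - p)) :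
    c^2 ≤ 12*R^3*(R + b - 2*s) := by
  have hp_le : p ≤ R*b := by
    nlinarith [sq_nonneg c, mul_nonneg hR.le hb0, sq_nonneg (R*b - p), sq_nonneg (R*b + p)]
  have h1 : c^2 ≤ 4*R^2*(R*b - p) := by
    rcases le_or_gt (R*b + p) 0 with h | h
    · nlinarith [sq_nonneg c]
    · have h4 : R*b + p ≤ 4*R^2 := by nlinarith
      nlinarith [hlag, mul_le_mul_of_nonneg_left h4 (sub_nonneg.mpr hp_le)]
  have hs_le : 2*s ≤ R + b := by nlinarith [hgap, hp_le, hs0, hb0, hR]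
  have h6 : R + b + 2*s ≤ 6*R := by linarith
  have hpos : 0 ≤ R + b - 2*s := by linarith
  calc c^2 ≤ 4*R^2*(R*b - p) := h1
    _ = (2*R^2*(R + b - 2*s))*(R + b + 2*s) := by linear_combination (-2*R^2)*hgap
    _ ≤ (2*R^2*(R + b - 2*s))*(6*R) :=
        mul_le_mul_of_nonneg_left h6 (mul_nonneg (by positivity) hpos)
    _ = 12*R^3*(R + b - 2*s) := by ring

lemma mid_gain (R : ℝ) (hR : 0 < R) (A D : ℂ) (hA : ‖A‖ = R) (hD : ‖D‖ ≤ R) :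
    (cross2 D A)^2 ≤ 12*R^3*(R + dist D A - 2*dist ((1/2 : ℝ) • D) A) := by
  have hA2 : A.re^2 + A.im^2 = R^2 := by rw [← normsq_c, hA]
  have hb2 : (dist D A)^2 = (D.re - A.re)^2 + (D.im - A.im)^2 := by
    rw [dist_eq_norm, normsq_c]; simp [Complex.sub_re, Complex.sub_im]
  have hs2 : (dist ((1/2 : ℝ) • D) A)^2 = ((1/2)*D.re - A.re)^2 + ((1/2)*D.im - A.im)^2 := by
    rw [dist_eq_norm, normsq_c]
    simp [Complex.sub_re, Complex.sub_im, Complex.smul_re, Complex.smul_im]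
  have hbR : dist D A ≤ 2*R := by
    calc dist D A = ‖D - A‖ := dist_eq_norm _ _
    _ ≤ ‖D‖ + ‖A‖ := norm_sub_le _ _
    _ ≤ 2*R := by rw [hA]; linarith
  apply mid_core R (dist D A) (dist ((1/2 : ℝ) • D) A) (cross2 D A)
      (A.re*(A.re - D.re) + A.im*(A.im - D.im)) hR dist_nonneg dist_nonneg hbR
  · unfold cross2
    linear_combination (((D.re - A.re)^2 + (D.im - A.im)^2))*hA2 - (R^2)*hb2
  · linear_combination hb2 - 4*hs2 - hA2


set_option maxHeartbeats 2000000 in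
theorem statement11 (τ : ℝ) (hτ0 : 0 < τ) (hτ : τ ≤ 1 / 100) :
    ∃ μ : ℝ, 0 < μ ∧
      ∀ R : ℝ, 0 < R → ∀ A B C : ℂ,
        ‖A‖ = R → ‖B‖ = R → ‖C‖ = R →
        ∀ D ∈ closedBall (0 : ℂ) R,
          (∀ P ∈ closedBall (0 : ℂ) R,
            dist D A + dist D B + dist D C ≤ dist P A + dist P B + dist P C) →
          τ * R ≤ ‖D‖ →
          dist D A + dist D B + dist D C < (3 - μ) * R := by
  refine ⟨τ^2/25, by positivity, ?_⟩
  intro R hR A B C hA hB hC D hDball hmin hτD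
  rw [mem_closedBall, dist_zero_right] at hDball
  have hd0 : 0 < ‖D‖ := lt_of_lt_of_le (by positivity) hτD
  -- midpoint estimate
  have hmemM : (1/2 : ℝ) • D ∈ closedBall (0:ℂ) R := by
    rw [mem_closedBall, dist_zero_right, norm_smul]
    simp only [Real.norm_eq_abs]
    rw [abs_of_nonneg (by norm_num : (0:ℝ) ≤ (1/2:ℝ))]
    linarith only [hDball, norm_nonneg D]
  have hmid := hmin ((1/2 : ℝ) • D) hmemM
  have gA := mid_gain R hR A D hA hDball
  have gB := mid_gain R hR B D hB hDball
  have gC := mid_gain R hR C D hC hDball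
  have hQ : (cross2 D A)^2 + (cross2 D B)^2 + (cross2 D C)^2
      ≤ 12*R^3*(3*R - (dist D A + dist D B + dist D C)) := by
    have h := mul_nonneg (by positivity : (0:ℝ) ≤ 12*R^3) (sub_nonneg.mpr hmid)
    linarith only [gA, gB, gC, h]
  rcases le_or_gt (τ^2*R^4/2) ((cross2 D A)^2 + (cross2 D B)^2 + (cross2 D C)^2)
    with hcase | hcase
  · -- large cross products
    have hgap2 : τ^2*R^4/2 ≤ 12*R^3*(3*R - (dist D A + dist D B + dist D C)) :=
      le_trans hcase hQ
    have h12 : (0:ℝ) < 12*R^3 := by positivity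
    have h24 : τ^2*R/24 ≤ 3*R - (dist D A + dist D B + dist D C) := by
      nlinarith only [hgap2, h12]
    have hpos : 0 < τ^2*R := by positivity
    linarith only [h24, hpos]
  · -- small cross products: use S = A+B+C direction
    set S : ℂ := A + B + C with hSdef
    have hA2 : A.re^2 + A.im^2 = R^2 := by rw [← normsq_c, hA]
    have hB2 : B.re^2 + B.im^2 = R^2 := by rw [← normsq_c, hB]
    have hC2 : C.re^2 + C.im^2 = R^2 := by rw [← normsq_c, hC]
    have hD2 : D.re^2 + D.im^2 = ‖D‖^2 := (normsq_c D).symm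
    have hPtau : (0:ℝ) < τ^2*R^3 := by positivity
    -- per-point lower bounds
    have lag : ∀ X : ℂ, X.re^2 + X.im^2 = R^2 →
        (D.re*X.re + D.im*X.im)^2 + (cross2 D X)^2 = ‖D‖^2*R^2 := by
      intro X hX
      unfold cross2
      linear_combination (D.re^2 + D.im^2)*hX + (R^2)*hD2
    have habc : ∀ X : ℂ, X.re^2 + X.im^2 = R^2 → (cross2 D X)^2 ≤ τ^2*R^4/2 →
        (‖D‖*R - ‖D‖*(cross2 D X)^2/(τ^2*R^3) ≤ |D.re*X.re + D.im*X.im| ∧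
          |D.re*X.re + D.im*X.im| ≤ ‖D‖*R) ∧ 0 ≤ ‖D‖*(cross2 D X)^2/(τ^2*R^3) := by
      intro X hX hcX
      exact alpha_lb τ R ‖D‖ (D.re*X.re + D.im*X.im) (cross2 D X)
        (‖D‖*(cross2 D X)^2/(τ^2*R^3)) hτ0 hR hτD hDball (lag X hX) hcX
        (div_mul_cancel₀ _ (ne_of_gt hPtau))
    have cA : (cross2 D A)^2 ≤ τ^2*R^4/2 := by linarith only [hcase, sq_nonneg (cross2 D B), sq_nonneg (cross2 D C)]
    have cB : (cross2 D B)^2 ≤ τ^2*R^4/2 := by linarith only [hcase, sq_nonneg (cross2 D A), sq_nonneg (cross2 D C)]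
    have cC : (cross2 D C)^2 ≤ τ^2*R^4/2 := by linarith only [hcase, sq_nonneg (cross2 D A), sq_nonneg (cross2 D B)]
    obtain ⟨⟨lA, uA⟩, eA0⟩ := habc A hA2 cA
    obtain ⟨⟨lB, uB⟩, eB0⟩ := habc B hB2 cB
    obtain ⟨⟨lC, uC⟩, eC0⟩ := habc C hC2 cC
    have hsum := aux_sum (‖D‖*R) _ _ _ _ _ _ lA lB lC uA uB uC
    -- sum of the E's is at most ‖D‖*R/2
    have hEsum : ‖D‖*(cross2 D A)^2/(τ^2*R^3) + ‖D‖*(cross2 D B)^2/(τ^2*R^3)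
        + ‖D‖*(cross2 D C)^2/(τ^2*R^3) ≤ ‖D‖*R/2 := by
      rw [← add_div, ← add_div, div_le_iff₀ hPtau]
      have h := mul_le_mul_of_nonneg_left hcase.le hd0.le
      linarith only [h]
    have hsum2 : ‖D‖*R/2 ≤ |D.re*A.re + D.im*A.im + (D.re*B.re + D.im*B.im)
        + (D.re*C.re + D.im*C.im)| := by linarith only [hsum, hEsum]
    -- Cauchy–Schwarz
    have hSre : S.re = A.re + B.re + C.re := by simp [hSdef]
    have hSim : S.im = A.im + B.im + C.im := by simp [hSdef]
    have hCS : |D.re*A.re + D.im*A.im + (D.re*B.re + D.im*B.im)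
        + (D.re*C.re + D.im*C.im)| ≤ ‖D‖*‖S‖ := by
      apply abs_le_of_sq _ _ (by positivity)
      have hS2' : ‖S‖^2 = S.re^2 + S.im^2 := normsq_c S
      rw [hSre, hSim] at hS2'
      have hid : (D.re*A.re + D.im*A.im + (D.re*B.re + D.im*B.im)
          + (D.re*C.re + D.im*C.im))^2
          + (D.re*(A.im+B.im+C.im) - D.im*(A.re+B.re+C.re))^2 = ‖D‖^2*‖S‖^2 := by
        linear_combination ((A.re+B.re+C.re)^2 + (A.im+B.im+C.im)^2)*hD2 - (‖D‖^2)*hS2'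
      linarith only [sq_nonneg (D.re*(A.im+B.im+C.im) - D.im*(A.re+B.re+C.re)), hid]
    have hSlb : R/2 ≤ ‖S‖ := by nlinarith only [hd0, le_trans hsum2 hCS]
    have hSub : ‖S‖ ≤ 3*R := by
      calc ‖S‖ ≤ ‖A + B‖ + ‖C‖ := norm_add_le _ _
        _ ≤ ‖A‖ + ‖B‖ + ‖C‖ := by linarith only [norm_add_le A B]
        _ = 3*R := by rw [hA, hB, hC]; ring
    -- test point P = S/3
    set P : ℂ := (1/3 : ℝ) • S with hPdef
    have hPball : P ∈ closedBall (0:ℂ) R := by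
      rw [mem_closedBall, dist_zero_right, hPdef, norm_smul]
      simp only [Real.norm_eq_abs]
      rw [abs_of_nonneg (by norm_num : (0:ℝ) ≤ (1/3:ℝ))]
      linarith only [hSub]
    have htest := hmin P hPball
    have tA := testpt R hR A P hA
    have tB := testpt R hR B P hB
    have tC := testpt R hR C P hC
    have hPre : P.re = (1/3)*S.re := by rw [hPdef, Complex.smul_re]; norm_num
    have hPim : P.im = (1/3)*S.im := by rw [hPdef, Complex.smul_im]; norm_num
    have hTsum : ((P.re^2 + P.im^2) - 2*(P.re*A.re + P.im*A.im))
        + ((P.re^2 + P.im^2) - 2*(P.re*B.re + P.im*B.im))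
        + ((P.re^2 + P.im^2) - 2*(P.re*C.re + P.im*C.im)) = -‖S‖^2/3 := by
      have hS2' : ‖S‖^2 = S.re^2 + S.im^2 := normsq_c S
      rw [hPre, hPim, hS2', hSre, hSim]
      ring
    have hdiv : ((P.re^2 + P.im^2) - 2*(P.re*A.re + P.im*A.im))/(2*R)
        + ((P.re^2 + P.im^2) - 2*(P.re*B.re + P.im*B.im))/(2*R)
        + ((P.re^2 + P.im^2) - 2*(P.re*C.re + P.im*C.im))/(2*R) = (-‖S‖^2/3)/(2*R) := by
      rw [← add_div, ← add_div, hTsum]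
    have hSgap : (-‖S‖^2/3)/(2*R) ≤ -(R/24) := by
      rw [div_le_iff₀ (by positivity : (0:ℝ) < 2*R)]
      nlinarith only [hSlb, hR]
    have hfinal : dist D A + dist D B + dist D C ≤ 3*R - R/24 := by
      linarith only [htest, tA, tB, tC, hdiv, hSgap]
    have hτsq : τ^2 ≤ 1/10000 := by nlinarith only [hτ, hτ0]
    have hτR : τ^2*R ≤ (1/10000)*R := by nlinarith only [hτsq, hR.le]
    linarith only [hfinal, hR, hτR]
end
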